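/- Let n be an odd prime and let A = (a_{i,j}) be the n×n matrix over Z_{4n²} defined by: a_{i,j} = 2n(j−1) + 2i − 1 if i ≡ j (mod 2) and 1 ≤ j ≤ (n+1)/2; a_{i,j} = 2n(n−j+1) − 2i + 1 if i ≢ j (mod 2) and 1 ≤ j ≤ (n+1)/2; a_{i,j} = 2nj − 2i + 1 if i ≡ j (mod 2) and (n+3)/2 ≤ j ≤ n; a_{i,j} = 2n(n−j) + 2i − 1 if i ≢ j (mod 2) and (n+3)/2 ≤ j ≤ n. Then for every j ∈ [1,n] the additive order in Z_{4n²} of the sum of the entries of column j is 4 if j = (n+1)/2 and is 4n otherwise; and for every i ∈ [1,n] the additive order in Z_{4n²} of the sum of the entries of row i is 4 if i = (n+1)/2 and is 4n² otherwise. (This is the key computational claim underlying the paper's biembedding of K_{2×2n²} whose faces have length 4n, 4n² or 4n³.) -/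
import Mathlib

section Helpers

lemma sum_parity_even (a b c d : ℤ) (k : ℕ) :
    ∑ x ∈ Finset.Icc 1 (2*k), (if x % 2 = 1 then a + b*(x:ℤ) else c + d*(x:ℤ))
      = k*a + b*(k:ℤ)^2 + k*c + d*((k:ℤ)^2+(k:ℤ)) := by
  induction k with
  | zero => simp
  | succ k ih =>
      have h1 : 2*(k+1) = (2*k+1)+1 := by ring
      rw [h1, Finset.sum_Icc_succ_top (by omega), Finset.sum_Icc_succ_top (by omega), ih]
      have e1 : (2*k+1) % 2 = 1 := by omega
      have e2 : (2*k+1+1) % 2 = 0 := by omega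
      rw [e1, e2]
      simp only [if_true, if_pos rfl]
      norm_num
      ring

lemma sum_parity_odd (a b c d : ℤ) (k : ℕ) :
    ∑ x ∈ Finset.Icc 1 (2*k+1), (if x % 2 = 1 then a + b*(x:ℤ) else c + d*(x:ℤ))
      = ((k:ℤ)+1)*a + b*((k:ℤ)+1)^2 + k*c + d*((k:ℤ)^2+(k:ℤ)) := by
  rw [Finset.sum_Icc_succ_top (by omega), sum_parity_even]
  have e1 : (2*k+1) % 2 = 1 := by omega
  rw [e1]
  simp only [if_pos rfl]
  push_cast
  ring

lemma addOrderOf_intCast (v : ℕ) (hv : v ≠ 0) (z : ℤ) :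
    addOrderOf ((z : ZMod v)) = v / v.gcd z.natAbs := by
  rcases Int.natAbs_eq z with h | h
  · rw [h, Int.cast_natCast]; exact ZMod.addOrderOf_coe _ hv
  · rw [h, Int.cast_neg, Int.cast_natCast, addOrderOf_neg, Int.natAbs_neg, Int.natAbs_natCast]
    exact ZMod.addOrderOf_coe _ hv

lemma cop4 {n : ℕ} (hodd : Odd n) : Nat.Coprime 4 n := by
  have h2 : Nat.Coprime 2 n := Nat.prime_two.coprime_iff_not_dvd.mpr (by
    intro h; exact (Nat.not_even_iff_odd.mpr hodd) (even_iff_two_dvd.mpr h))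
  have : (4:ℕ) = 2^2 := by norm_num
  rw [this]; exact h2.pow_left 2

lemma copM {n M : ℕ} (hp : n.Prime) (h2 : ¬ 2 ∣ M) (hn : ¬ n ∣ M) :
    Nat.Coprime (4*n^2) M := by
  have c2 : Nat.Coprime 2 M := Nat.prime_two.coprime_iff_not_dvd.mpr h2
  have c4 : Nat.Coprime 4 M := by
    have : (4:ℕ) = 2^2 := by norm_num
    rw [this]; exact c2.pow_left 2
  have cn : Nat.Coprime n M := hp.coprime_iff_not_dvd.mpr hn
  exact c4.mul (cn.pow_left 2)

lemma ord_4n2 {n : ℕ} (hp : n.Prime) (z : ℤ)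
    (h2 : ¬ (2:ℤ) ∣ z) (hn : ¬ (n:ℤ) ∣ z) :
    addOrderOf ((z : ZMod (4*n^2))) = 4*n^2 := by
  have hv : 4*n^2 ≠ 0 := Nat.mul_ne_zero (by norm_num) (pow_ne_zero 2 hp.ne_zero)
  rw [addOrderOf_intCast _ hv]
  have h2' : ¬ 2 ∣ z.natAbs := by
    rw [← Int.natCast_dvd_natCast]; simpa [Int.dvd_natAbs] using h2
  have hn' : ¬ n ∣ z.natAbs := by
    rw [← Int.natCast_dvd_natCast]; simpa [Int.dvd_natAbs] using hn
  rw [Nat.Coprime.gcd_eq_one (copM hp h2' hn'), Nat.div_one]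

lemma ord_4n {n : ℕ} (hp : n.Prime) (T : ℤ)
    (h2 : ¬ (2:ℤ) ∣ T) (hn : ¬ (n:ℤ) ∣ T) :
    addOrderOf (((n*T : ℤ) : ZMod (4*n^2))) = 4*n := by
  have hv : 4*n^2 ≠ 0 := Nat.mul_ne_zero (by norm_num) (pow_ne_zero 2 hp.ne_zero)
  have hn0 : 0 < n := hp.pos
  rw [addOrderOf_intCast _ hv]
  have h2' : ¬ 2 ∣ T.natAbs := by
    rw [← Int.natCast_dvd_natCast]; simpa [Int.dvd_natAbs] using h2
  have hn' : ¬ n ∣ T.natAbs := by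
    rw [← Int.natCast_dvd_natCast]; simpa [Int.dvd_natAbs] using hn
  have hna : ((n:ℤ)*T).natAbs = n * T.natAbs := by
    rw [Int.natAbs_mul, Int.natAbs_natCast]
  rw [hna]
  have h1 : 4*n^2 = n*(4*n) := by ring
  rw [h1, Nat.gcd_mul_left]
  have hg : Nat.gcd (4*n) T.natAbs = 1 := by
    have c4 : Nat.Coprime 4 T.natAbs := by
      have c2 : Nat.Coprime 2 T.natAbs := Nat.prime_two.coprime_iff_not_dvd.mpr h2'
      have : (4:ℕ) = 2^2 := by norm_num
      rw [this]; exact c2.pow_left 2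
    have cn : Nat.Coprime n T.natAbs := hp.coprime_iff_not_dvd.mpr hn'
    exact c4.mul cn
  rw [hg, Nat.mul_one]
  have : n*(4*n) = (4*n)*n := by ring
  rw [this, Nat.mul_div_cancel _ hn0]

lemma ord_4 {n : ℕ} (hp : n.Prime) (hodd : Odd n) (z : ℤ) (hz : z = (n:ℤ)^3) :
    addOrderOf ((z : ZMod (4*n^2))) = 4 := by
  subst hz
  have hv : 4*n^2 ≠ 0 := Nat.mul_ne_zero (by norm_num) (pow_ne_zero 2 hp.ne_zero)
  have h : ((n:ℤ)^3 : ℤ) = ((n^3 : ℕ) : ℤ) := by push_cast; ring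
  rw [h, addOrderOf_intCast _ hv, Int.natAbs_natCast]
  have h1 : 4*n^2 = n^2*4 := by ring
  have h2 : n^3 = n^2*n := by ring
  rw [h1, h2, Nat.gcd_mul_left, Nat.Coprime.gcd_eq_one (cop4 hodd), Nat.mul_one]
  rw [mul_comm (n^2) 4, Nat.mul_div_cancel _ (pow_pos hp.pos 2)]

lemma odd_not_two_dvd (x : ℤ) : ¬ (2:ℤ) ∣ (2*x+1) := by omega

lemma dvd_helper {n k w : ℕ} (hk : n = 2*k+1) (hw : w ≤ 2*k) :
    ((n:ℤ) ∣ (2*(w:ℤ)+1)) ↔ w = k := by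
  subst hk
  constructor
  · rintro ⟨c, hc⟩
    have hw0 : (0:ℤ) ≤ (w:ℤ) := Int.natCast_nonneg w
    have hk0 : (0:ℤ) ≤ (k:ℤ) := Int.natCast_nonneg k
    have hwz : (w:ℤ) ≤ 2*(k:ℤ) := by exact_mod_cast hw
    have hcast : ((2*k+1 : ℕ) : ℤ) = 2*(k:ℤ)+1 := by push_cast; ring
    rw [hcast] at hc
    have h0 : (0:ℤ) < c := by nlinarith
    have h2 : c < 2 := by nlinarith
    have hc1 : c = 1 := by omega
    rw [hc1, mul_one] at hc
    omega
  · rintro rfl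
    exact ⟨1, by push_cast; ring⟩

end Helpers


/-- Proposition 5.11 (key computation): for the matrix of the globally simple
NH_{2n²}(n;n) over Z_{4n²}, n an odd prime, the additive order of the sum of column j
is 4 if j = (n+1)/2 and 4n otherwise, and the additive order of the sum of row i is
4 if i = (n+1)/2 and 4n² otherwise. -/
theorem stmt18 (n : ℕ) (hp : n.Prime) (hodd : Odd n)
    (A : ℕ → ℕ → ZMod (4 * n ^ 2))
    (hA : ∀ i ∈ Finset.Icc 1 n, ∀ j ∈ Finset.Icc 1 n,
      (i % 2 = j % 2 → j ≤ (n + 1) / 2 →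
        A i j = ((2 * (n : ℤ) * ((j : ℤ) - 1) + 2 * (i : ℤ) - 1 : ℤ) : ZMod (4 * n ^ 2))) ∧
      (i % 2 ≠ j % 2 → j ≤ (n + 1) / 2 →
        A i j = ((2 * (n : ℤ) * ((n : ℤ) - j + 1) - 2 * (i : ℤ) + 1 : ℤ) : ZMod (4 * n ^ 2))) ∧
      (i % 2 = j % 2 → (n + 3) / 2 ≤ j →
        A i j = ((2 * (n : ℤ) * j - 2 * (i : ℤ) + 1 : ℤ) : ZMod (4 * n ^ 2))) ∧
      (i % 2 ≠ j % 2 → (n + 3) / 2 ≤ j →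
        A i j = ((2 * (n : ℤ) * ((n : ℤ) - j) + 2 * (i : ℤ) - 1 : ℤ) : ZMod (4 * n ^ 2)))) :
    (∀ j ∈ Finset.Icc 1 n,
      (j = (n + 1) / 2 → addOrderOf (∑ i ∈ Finset.Icc 1 n, A i j) = 4) ∧
      (j ≠ (n + 1) / 2 → addOrderOf (∑ i ∈ Finset.Icc 1 n, A i j) = 4 * n)) ∧
    (∀ i ∈ Finset.Icc 1 n,
      (i = (n + 1) / 2 → addOrderOf (∑ j ∈ Finset.Icc 1 n, A i j) = 4) ∧
      (i ≠ (n + 1) / 2 → addOrderOf (∑ j ∈ Finset.Icc 1 n, A i j) = 4 * n ^ 2)) := by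
  have hn2 := hp.two_le
  obtain ⟨k0, hk0⟩ := hodd
  have hk' : n = 2*k0+1 := by omega
  have hodd' : Odd n := ⟨k0, hk0⟩
  have hk1 : 1 ≤ k0 := by omega
  have hnz : (n:ℤ) = 2*(k0:ℤ)+1 := by exact_mod_cast congrArg (Nat.cast : ℕ → ℤ) hk'
  have hIcc : Finset.Icc 1 n = Finset.Icc 1 (2*k0+1) := by rw [hk']
  have hIoc : ∀ b : ℕ, Finset.Ioc 0 b = Finset.Icc 1 b := fun b => (Finset.Icc_add_one_left_eq_Ioc 0 b).symm
  constructor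
  · -- columns
    intro j hj
    rw [Finset.mem_Icc] at hj
    have key : ∃ w : ℕ, w ≤ 2*k0 ∧ (w = k0 ↔ j = (n+1)/2) ∧
        (∑ i ∈ Finset.Icc 1 n, A i j)
          = ((((n:ℤ) * (2*(n:ℤ)*(k0:ℤ) + 2*(w:ℤ) + 1)) : ℤ) : ZMod (4*n^2)) := by
      by_cases hj2 : j % 2 = 1
      · -- j odd
        refine ⟨j-1, by omega, by omega, ?_⟩
        have hjz : ((j-1 : ℕ) : ℤ) = (j:ℤ) - 1 := by omega
        by_cases hjl : j ≤ k0+1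
        · have hval : ∀ i ∈ Finset.Icc 1 n, A i j =
              (((if i % 2 = 1 then (2*(n:ℤ)*((j:ℤ)-1) - 1) + 2*(i:ℤ)
                 else (2*(n:ℤ)*((n:ℤ)-(j:ℤ)+1) + 1) + (-2)*(i:ℤ)) : ℤ) : ZMod (4*n^2)) := by
            intro i hi
            rw [Finset.mem_Icc] at hi
            obtain ⟨e1, e2, e3, e4⟩ := hA i (Finset.mem_Icc.mpr hi) j (Finset.mem_Icc.mpr hj)
            by_cases hi2 : i % 2 = 1
            · rw [if_pos hi2, e1 (by omega) (by omega)]; congr 1; ring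
            · rw [if_neg hi2, e2 (by omega) (by omega)]; congr 1; ring
          rw [Finset.sum_congr rfl hval, hIcc, ← Int.cast_sum, sum_parity_odd]
          congr 1
          rw [hjz, hnz]; ring
        · have hval : ∀ i ∈ Finset.Icc 1 n, A i j =
              (((if i % 2 = 1 then (2*(n:ℤ)*(j:ℤ) + 1) + (-2)*(i:ℤ)
                 else (2*(n:ℤ)*((n:ℤ)-(j:ℤ)) - 1) + 2*(i:ℤ)) : ℤ) : ZMod (4*n^2)) := by
            intro i hi
            rw [Finset.mem_Icc] at hi
            obtain ⟨e1, e2, e3, e4⟩ := hA i (Finset.mem_Icc.mpr hi) j (Finset.mem_Icc.mpr hj)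
            by_cases hi2 : i % 2 = 1
            · rw [if_pos hi2, e3 (by omega) (by omega)]; congr 1; ring
            · rw [if_neg hi2, e4 (by omega) (by omega)]; congr 1; ring
          rw [Finset.sum_congr rfl hval, hIcc, ← Int.cast_sum, sum_parity_odd]
          congr 1
          rw [hjz, hnz]; ring
      · -- j even
        refine ⟨n-j, by omega, by omega, ?_⟩
        have hjz : ((n-j : ℕ) : ℤ) = (n:ℤ) - (j:ℤ) := by omega
        by_cases hjl : j ≤ k0+1
        · have hval : ∀ i ∈ Finset.Icc 1 n, A i j =
              (((if i % 2 = 1 then (2*(n:ℤ)*((n:ℤ)-(j:ℤ)+1) + 1) + (-2)*(i:ℤ)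
                 else (2*(n:ℤ)*((j:ℤ)-1) - 1) + 2*(i:ℤ)) : ℤ) : ZMod (4*n^2)) := by
            intro i hi
            rw [Finset.mem_Icc] at hi
            obtain ⟨e1, e2, e3, e4⟩ := hA i (Finset.mem_Icc.mpr hi) j (Finset.mem_Icc.mpr hj)
            by_cases hi2 : i % 2 = 1
            · rw [if_pos hi2, e2 (by omega) (by omega)]; congr 1; ring
            · rw [if_neg hi2, e1 (by omega) (by omega)]; congr 1; ring
          rw [Finset.sum_congr rfl hval, hIcc, ← Int.cast_sum, sum_parity_odd]
          congr 1
          rw [hjz, hnz]; ring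
        · have hval : ∀ i ∈ Finset.Icc 1 n, A i j =
              (((if i % 2 = 1 then (2*(n:ℤ)*((n:ℤ)-(j:ℤ)) - 1) + 2*(i:ℤ)
                 else (2*(n:ℤ)*(j:ℤ) + 1) + (-2)*(i:ℤ)) : ℤ) : ZMod (4*n^2)) := by
            intro i hi
            rw [Finset.mem_Icc] at hi
            obtain ⟨e1, e2, e3, e4⟩ := hA i (Finset.mem_Icc.mpr hi) j (Finset.mem_Icc.mpr hj)
            by_cases hi2 : i % 2 = 1
            · rw [if_pos hi2, e4 (by omega) (by omega)]; congr 1; ring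
            · rw [if_neg hi2, e3 (by omega) (by omega)]; congr 1; ring
          rw [Finset.sum_congr rfl hval, hIcc, ← Int.cast_sum, sum_parity_odd]
          congr 1
          rw [hjz, hnz]; ring
    obtain ⟨w, hw, hwj, hS⟩ := key
    rw [hS]
    constructor
    · intro hjm
      have hwk : w = k0 := hwj.mpr hjm
      have hrw : ((n:ℤ) * (2*(n:ℤ)*(k0:ℤ) + 2*(w:ℤ) + 1) : ℤ) = (n:ℤ)^3 := by
        rw [hwk, hnz]; ring
      rw [hrw]
      exact ord_4 hp hodd' _ rfl
    · intro hjm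
      have hwk : w ≠ k0 := fun h => hjm (hwj.mp h)
      set T : ℤ := 2*(n:ℤ)*(k0:ℤ) + 2*(w:ℤ) + 1 with hT
      have h2T : ¬ (2:ℤ) ∣ T := by
        have hrw : T = 2*((n:ℤ)*(k0:ℤ) + (w:ℤ)) + 1 := by rw [hT]; ring
        rw [hrw]; exact odd_not_two_dvd _
      have hnT : ¬ (n:ℤ) ∣ T := by
        intro h
        have hd : (n:ℤ) ∣ (n:ℤ)*(2*(k0:ℤ)) := Dvd.intro _ rfl
        have hrw : T = (n:ℤ)*(2*(k0:ℤ)) + (2*(w:ℤ)+1) := by rw [hT]; ring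
        rw [hrw] at h
        exact hwk ((dvd_helper hk' hw).mp ((dvd_add_right hd).mp h))
      exact ord_4n hp T h2T hnT
  · -- rows
    intro i hi
    rw [Finset.mem_Icc] at hi
    have key : ∃ e : ℤ, |e| ≤ (k0:ℤ) ∧ (e = 0 ↔ i = (n+1)/2) ∧
        (∑ j ∈ Finset.Icc 1 n, A i j) = ((((n:ℤ)^3 + 2*e) : ℤ) : ZMod (4*n^2)) := by
      have hsplit : (∑ j ∈ Finset.Icc 1 n, A i j)
          = (∑ j ∈ Finset.Ioc 0 (k0+1), A i j) + (∑ j ∈ Finset.Ioc (k0+1) n, A i j) := by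
        rw [show Finset.Icc 1 n = Finset.Ioc 0 n from (hIoc n).symm]
        exact (Finset.sum_Ioc_consecutive _ (by omega) (by omega)).symm
      obtain ⟨t, ht⟩ : ∃ t, k0 = 2*t ∨ k0 = 2*t+1 := ⟨k0/2, by omega⟩
      by_cases hi2 : i % 2 = 1
      · -- i odd
        have hG : ∀ j ∈ Finset.Ioc 0 (k0+1), A i j =
            (((if j % 2 = 1 then (2*(i:ℤ) - 1 - 2*(n:ℤ)) + (2*(n:ℤ))*(j:ℤ)
               else (2*(n:ℤ)*(n:ℤ)+2*(n:ℤ)-2*(i:ℤ)+1) + (-(2*(n:ℤ)))*(j:ℤ)) : ℤ) : ZMod (4*n^2)) := by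
          intro j hjm
          rw [Finset.mem_Ioc] at hjm
          obtain ⟨e1, e2, e3, e4⟩ := hA i (Finset.mem_Icc.mpr hi) j (Finset.mem_Icc.mpr ⟨by omega, by omega⟩)
          by_cases hj2 : j % 2 = 1
          · rw [if_pos hj2, e1 (by omega) (by omega)]; congr 1; ring
          · rw [if_neg hj2, e2 (by omega) (by omega)]; congr 1; ring
        have hH : ∀ j ∈ Finset.Ioc (k0+1) n, A i j =
            (((if j % 2 = 1 then (1 - 2*(i:ℤ)) + (2*(n:ℤ))*(j:ℤ)
               else (2*(n:ℤ)*(n:ℤ)+2*(i:ℤ)-1) + (-(2*(n:ℤ)))*(j:ℤ)) : ℤ) : ZMod (4*n^2)) := by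
          intro j hjm
          rw [Finset.mem_Ioc] at hjm
          obtain ⟨e1, e2, e3, e4⟩ := hA i (Finset.mem_Icc.mpr hi) j (Finset.mem_Icc.mpr ⟨by omega, by omega⟩)
          by_cases hj2 : j % 2 = 1
          · rw [if_pos hj2, e3 (by omega) (by omega)]; congr 1; ring
          · rw [if_neg hj2, e4 (by omega) (by omega)]; congr 1; ring
        have hHsplit : (∑ j ∈ Finset.Ioc (k0+1) n,
              (if j % 2 = 1 then (1 - 2*(i:ℤ)) + (2*(n:ℤ))*(j:ℤ)
               else (2*(n:ℤ)*(n:ℤ)+2*(i:ℤ)-1) + (-(2*(n:ℤ)))*(j:ℤ)))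
            = (∑ j ∈ Finset.Ioc 0 n,
              (if j % 2 = 1 then (1 - 2*(i:ℤ)) + (2*(n:ℤ))*(j:ℤ)
               else (2*(n:ℤ)*(n:ℤ)+2*(i:ℤ)-1) + (-(2*(n:ℤ)))*(j:ℤ)))
              - (∑ j ∈ Finset.Ioc 0 (k0+1),
              (if j % 2 = 1 then (1 - 2*(i:ℤ)) + (2*(n:ℤ))*(j:ℤ)
               else (2*(n:ℤ)*(n:ℤ)+2*(i:ℤ)-1) + (-(2*(n:ℤ)))*(j:ℤ))) := by
          rw [← Finset.sum_Ioc_consecutive _ (show (0:ℕ) ≤ k0+1 by omega) (show k0+1 ≤ n by omega)]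
          ring
        rcases ht with ht | ht
        · -- k0 = 2t, m odd, i odd: e = i - (k0+1)
          refine ⟨(i:ℤ) - ((k0:ℤ)+1), by rw [abs_le]; constructor <;> omega, by omega, ?_⟩
          have htz : (k0:ℤ) = 2*(t:ℤ) := by exact_mod_cast congrArg (Nat.cast : ℕ → ℤ) ht
          rw [hsplit, Finset.sum_congr rfl hG, Finset.sum_congr rfl hH,
            ← Int.cast_sum, ← Int.cast_sum, ← Int.cast_add]
          congr 1
          rw [hHsplit, hIoc, hIoc, hIcc,
            show k0+1 = 2*t+1 from by omega,
            sum_parity_odd, sum_parity_odd, sum_parity_odd]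
          rw [hnz, htz]; push_cast; ring
        · -- k0 = 2t+1, m even, i odd: e = (k0+1) - i
          refine ⟨((k0:ℤ)+1) - (i:ℤ), by rw [abs_le]; constructor <;> omega, by omega, ?_⟩
          have htz : (k0:ℤ) = 2*(t:ℤ)+1 := by exact_mod_cast congrArg (Nat.cast : ℕ → ℤ) ht
          rw [hsplit, Finset.sum_congr rfl hG, Finset.sum_congr rfl hH,
            ← Int.cast_sum, ← Int.cast_sum, ← Int.cast_add]
          congr 1
          rw [hHsplit, hIoc, hIoc, hIcc,
            show k0+1 = 2*(t+1) from by omega,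
            sum_parity_even, sum_parity_even, sum_parity_odd]
          rw [hnz, htz]; push_cast; ring
      · -- i even
        have hG : ∀ j ∈ Finset.Ioc 0 (k0+1), A i j =
            (((if j % 2 = 1 then (2*(n:ℤ)*(n:ℤ)+2*(n:ℤ)-2*(i:ℤ)+1) + (-(2*(n:ℤ)))*(j:ℤ)
               else (2*(i:ℤ) - 1 - 2*(n:ℤ)) + (2*(n:ℤ))*(j:ℤ)) : ℤ) : ZMod (4*n^2)) := by
          intro j hjm
          rw [Finset.mem_Ioc] at hjm
          obtain ⟨e1, e2, e3, e4⟩ := hA i (Finset.mem_Icc.mpr hi) j (Finset.mem_Icc.mpr ⟨by omega, by omega⟩)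
          by_cases hj2 : j % 2 = 1
          · rw [if_pos hj2, e2 (by omega) (by omega)]; congr 1; ring
          · rw [if_neg hj2, e1 (by omega) (by omega)]; congr 1; ring
        have hH : ∀ j ∈ Finset.Ioc (k0+1) n, A i j =
            (((if j % 2 = 1 then (2*(n:ℤ)*(n:ℤ)+2*(i:ℤ)-1) + (-(2*(n:ℤ)))*(j:ℤ)
               else (1 - 2*(i:ℤ)) + (2*(n:ℤ))*(j:ℤ)) : ℤ) : ZMod (4*n^2)) := by
          intro j hjm
          rw [Finset.mem_Ioc] at hjm
          obtain ⟨e1, e2, e3, e4⟩ := hA i (Finset.mem_Icc.mpr hi) j (Finset.mem_Icc.mpr ⟨by omega, by omega⟩)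
          by_cases hj2 : j % 2 = 1
          · rw [if_pos hj2, e4 (by omega) (by omega)]; congr 1; ring
          · rw [if_neg hj2, e3 (by omega) (by omega)]; congr 1; ring
        have hHsplit : (∑ j ∈ Finset.Ioc (k0+1) n,
              (if j % 2 = 1 then (2*(n:ℤ)*(n:ℤ)+2*(i:ℤ)-1) + (-(2*(n:ℤ)))*(j:ℤ)
               else (1 - 2*(i:ℤ)) + (2*(n:ℤ))*(j:ℤ)))
            = (∑ j ∈ Finset.Ioc 0 n,
              (if j % 2 = 1 then (2*(n:ℤ)*(n:ℤ)+2*(i:ℤ)-1) + (-(2*(n:ℤ)))*(j:ℤ)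
               else (1 - 2*(i:ℤ)) + (2*(n:ℤ))*(j:ℤ)))
              - (∑ j ∈ Finset.Ioc 0 (k0+1),
              (if j % 2 = 1 then (2*(n:ℤ)*(n:ℤ)+2*(i:ℤ)-1) + (-(2*(n:ℤ)))*(j:ℤ)
               else (1 - 2*(i:ℤ)) + (2*(n:ℤ))*(j:ℤ))) := by
          rw [← Finset.sum_Ioc_consecutive _ (show (0:ℕ) ≤ k0+1 by omega) (show k0+1 ≤ n by omega)]
          ring
        rcases ht with ht | ht
        · -- k0 = 2t, m odd, i even: e = (k0+1) - i
          refine ⟨((k0:ℤ)+1) - (i:ℤ), by rw [abs_le]; constructor <;> omega, by omega, ?_⟩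
          have htz : (k0:ℤ) = 2*(t:ℤ) := by exact_mod_cast congrArg (Nat.cast : ℕ → ℤ) ht
          rw [hsplit, Finset.sum_congr rfl hG, Finset.sum_congr rfl hH,
            ← Int.cast_sum, ← Int.cast_sum, ← Int.cast_add]
          congr 1
          rw [hHsplit, hIoc, hIoc, hIcc,
            show k0+1 = 2*t+1 from by omega,
            sum_parity_odd, sum_parity_odd, sum_parity_odd]
          rw [hnz, htz]; push_cast; ring
        · -- k0 = 2t+1, m even, i even: e = i - (k0+1)
          refine ⟨(i:ℤ) - ((k0:ℤ)+1), by rw [abs_le]; constructor <;> omega, by omega, ?_⟩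
          have htz : (k0:ℤ) = 2*(t:ℤ)+1 := by exact_mod_cast congrArg (Nat.cast : ℕ → ℤ) ht
          rw [hsplit, Finset.sum_congr rfl hG, Finset.sum_congr rfl hH,
            ← Int.cast_sum, ← Int.cast_sum, ← Int.cast_add]
          congr 1
          rw [hHsplit, hIoc, hIoc, hIcc,
            show k0+1 = 2*(t+1) from by omega,
            sum_parity_even, sum_parity_even, sum_parity_odd]
          rw [hnz, htz]; push_cast; ring
    obtain ⟨e, he, he0, hS⟩ := key
    rw [hS]
    constructor
    · intro him
      have hez : e = 0 := he0.mpr him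
      have hrw : ((n:ℤ)^3 + 2*e : ℤ) = (n:ℤ)^3 := by rw [hez]; ring
      rw [hrw]
      exact ord_4 hp hodd' _ rfl
    · intro him
      have hez : e ≠ 0 := fun h => him (he0.mp h)
      have h2 : ¬ (2:ℤ) ∣ ((n:ℤ)^3 + 2*e) := by
        have hoddn : Odd ((n:ℤ)) := by exact_mod_cast hodd'
        obtain ⟨c, hc⟩ := hoddn.pow (n := 3)
        have hrw : (n:ℤ)^3 + 2*e = 2*(c+e)+1 := by rw [hc]; ring
        rw [hrw]; exact odd_not_two_dvd _
      have hnd : ¬ (n:ℤ) ∣ ((n:ℤ)^3 + 2*e) := by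
        intro h
        have hn3dvd : (n:ℤ) ∣ (n:ℤ)^3 := dvd_pow_self _ (by norm_num)
        have h2e : (n:ℤ) ∣ 2*e := (dvd_add_right hn3dvd).mp h
        have hpos : 0 < |2*e| := abs_pos.mpr (by omega)
        have hle := Int.le_of_dvd hpos ((dvd_abs _ _).mpr h2e)
        have habs : |2*e| = 2*|e| := by rw [abs_mul]; norm_num
        have hb := abs_le.mp he
        rw [habs] at hle
        have : |e| ≤ (k0:ℤ) := he
        omega
      exact ord_4n2 hp _ h2 hnd
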